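/- Let H be a filtered connected bialgebra over a field (H = ⋃_n H^n with H^0 = K·1, Δ(H^n) ⊆ Σ_{p+q=n} H^p ⊗ H^q), and let J ≠ {0} be a left coideal (Δ(J) ⊆ J ⊗ H and ε(J) = 0) with J ∩ H^0 = {0}. Then J contains a nonzero primitive element of H. -/

import Mathlib

open scoped TensorProduct

/-- Right contraction: `a ⊗ b ↦ f b • a`. -/
noncomputable def ctr18 {K H : Type*} [CommRing K] [AddCommGroup H] [Module K H]
    (f : H →ₗ[K] K) : H ⊗[K] H →ₗ[K] H :=
  (TensorProduct.rid K H).toLinearMap ∘ₗ LinearMap.lTensor H f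

@[simp] lemma ctr18_tmul {K H : Type*} [CommRing K] [AddCommGroup H] [Module K H]
    (f : H →ₗ[K] K) (a b : H) : ctr18 f (a ⊗ₜ[K] b) = f b • a := by
  simp [ctr18]

/-- If all right contractions against coordinate functionals of a basis vanish, the
tensor is zero. -/
lemma ctr18_zero {K H : Type*} [Field K] [AddCommGroup H] [Module K H]
    {ι : Type*} [DecidableEq ι] (b : Module.Basis ι K H) (t : H ⊗[K] H)
    (h : ∀ j : ι, ctr18 (b.coord j) t = 0) : t = 0 := by
  let φ : H ⊗[K] H ≃ₗ[K] (ι →₀ H) :=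
    (LinearEquiv.lTensor H b.repr).trans (TensorProduct.finsuppScalarRight K K H ι)
  have key : ∀ j, φ t j = ctr18 (b.coord j) t := by
    intro j
    have : (Finsupp.lapply j ∘ₗ (φ : H ⊗[K] H →ₗ[K] ι →₀ H)) = ctr18 (b.coord j) := by
      apply TensorProduct.ext'
      intro a c
      simp [φ, ctr18, LinearEquiv.lTensor, TensorProduct.finsuppScalarRight_apply_tmul_apply,
        Module.Basis.coord]
    exact DFunLike.congr_fun this t
  have : φ t = 0 := by
    ext j; rw [key j, h j]; rfl
  simpa using congrArg φ.symm this

theorem stmt18 {K H : Type*} [Field K] [Ring H] [Bialgebra K H]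
    (F : ℕ → Submodule K H) (hmono : Monotone F) (hunion : (⨆ n, F n) = ⊤)
    (hconn : F 0 = 1)
    (hcomulF : ∀ n : ℕ, ∀ x ∈ F n, Coalgebra.comul (R := K) x ∈
      ⨆ (p : ℕ) (q : ℕ) (_ : p + q = n),
        Submodule.span K {z : H ⊗[K] H | ∃ a ∈ F p, ∃ b ∈ F q, z = a ⊗ₜ[K] b})
    (J : Submodule K H) (hJ : J ≠ ⊥)
    (hcoideal : ∀ x ∈ J, Coalgebra.comul (R := K) x ∈
      Submodule.span K {z : H ⊗[K] H | ∃ a ∈ J, ∃ b : H, z = a ⊗ₜ[K] b})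
    (hcounit : ∀ x ∈ J, Coalgebra.counit (R := K) x = 0)
    (hJ0 : J ⊓ F 0 = ⊥) :
    ∃ x ∈ J, x ≠ 0 ∧
      Coalgebra.comul (R := K) x = x ⊗ₜ[K] (1 : H) + (1 : H) ⊗ₜ[K] x := by
  classical
  obtain ⟨x0, hx0J, hx0⟩ := Submodule.exists_mem_ne_zero_of_ne_bot hJ
  have hexists : ∃ n, ∃ y, y ∈ J ∧ y ≠ 0 ∧ y ∈ F n := by
    have hx0top : x0 ∈ ⨆ n, F n := by rw [hunion]; trivial
    obtain ⟨m, hm⟩ := (Submodule.mem_iSup_of_directed _ hmono.directed_le).mp hx0top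
    exact ⟨m, x0, hx0J, hx0, hm⟩
  set n := Nat.find hexists with hndef
  obtain ⟨x, hxJ, hxne, hxF⟩ := Nat.find_spec hexists
  have hmin : ∀ m, m < n → ∀ y, y ∈ J → y ∈ F m → y = 0 := by
    intro m hm y hyJ hyF
    by_contra hy
    exact Nat.find_min hexists hm ⟨y, hyJ, hy, hyF⟩
  have hn1 : 1 ≤ n := by
    by_contra h
    have h0 : n = 0 := by omega
    apply hxne
    have : x ∈ J ⊓ F 0 := ⟨hxJ, h0 ▸ hxF⟩
    rw [hJ0] at this
    simpa using this
  have hMbot : ∀ y, y ∈ J → y ∈ F (n - 1) → y = 0 := fun y hyJ hyF =>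
    hmin (n - 1) (by omega) y hyJ hyF
  -- the projection π : H → H, π z = z - ε z • 1
  set ε : H →ₗ[K] K := Coalgebra.counit (R := K) with hε
  set π : H →ₗ[K] H := LinearMap.id - (Algebra.linearMap K H) ∘ₗ ε with hπ
  have hπ_apply : ∀ z : H, π z = z - ε z • 1 := by
    intro z
    simp [hπ, Algebra.algebraMap_eq_smul_one]
  set Δx : H ⊗[K] H := Coalgebra.comul (R := K) x with hΔx
  set r : H ⊗[K] H := Δx - x ⊗ₜ[K] (1 : H) - (1 : H) ⊗ₜ[K] x with hr
  set V : Submodule K (H ⊗[K] H) :=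
    Submodule.span K {z : H ⊗[K] H | ∃ a ∈ J, ∃ b : H, z = a ⊗ₜ[K] b} with hV
  set W : Submodule K (H ⊗[K] H) :=
    Submodule.span K {z : H ⊗[K] H | ∃ a ∈ F (n - 1), ∃ b : H, z = a ⊗ₜ[K] b} with hW
  -- left projection: (π ⊗ id) Δx = Δx - 1 ⊗ x
  have hrT : LinearMap.rTensor H π Δx = Δx - (1 : H) ⊗ₜ[K] x := by
    rw [hπ, LinearMap.rTensor_sub]
    simp only [LinearMap.sub_apply, LinearMap.rTensor_id, LinearMap.id_apply]
    congr 1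
    rw [LinearMap.rTensor_comp, LinearMap.comp_apply]
    rw [hΔx, hε, Coalgebra.rTensor_counit_comul]
    simp [Algebra.algebraMap_eq_smul_one]
  have hlT : LinearMap.lTensor H π Δx = Δx - x ⊗ₜ[K] (1 : H) := by
    rw [hπ, LinearMap.lTensor_sub]
    simp only [LinearMap.sub_apply, LinearMap.lTensor_id, LinearMap.id_apply]
    congr 1
    rw [LinearMap.lTensor_comp, LinearMap.comp_apply]
    rw [hΔx, hε, Coalgebra.lTensor_counit_comul]
    simp [Algebra.algebraMap_eq_smul_one]
  -- r ∈ V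
  have hrV : r ∈ V := by
    have h1 : LinearMap.rTensor H π Δx ∈ V := by
      have hΔV : Δx ∈ V := hcoideal x hxJ
      refine Submodule.span_induction ?_ ?_ ?_ ?_ hΔV
      · rintro z ⟨a, haJ, b, rfl⟩
        rw [LinearMap.rTensor_tmul]
        rw [hπ_apply, hcounit a haJ]
        have hm : (a : H) ⊗ₜ[K] b ∈ V := Submodule.subset_span (by exact ⟨a, haJ, b, rfl⟩)
        simpa using hm
      · simp
      · intro s t _ _ hs ht; rw [map_add]; exact add_mem hs ht
      · intro c s _ hs; rw [map_smul]; exact Submodule.smul_mem _ _ hs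
    rw [hrT] at h1
    have h2 : x ⊗ₜ[K] (1 : H) ∈ V := Submodule.subset_span (by exact ⟨x, hxJ, 1, rfl⟩)
    have := sub_mem h1 h2
    simpa [hr, sub_sub, add_comm] using this
  -- r ∈ W
  have hrW : r ∈ W := by
    have h1 : LinearMap.lTensor H π Δx ∈ W := by
      have hΔF := hcomulF n x hxF
      have hle : (⨆ (p : ℕ) (q : ℕ) (_ : p + q = n),
          Submodule.span K {z : H ⊗[K] H | ∃ a ∈ F p, ∃ b ∈ F q, z = a ⊗ₜ[K] b}) ≤
          Submodule.comap (LinearMap.lTensor H π) W := by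
        refine iSup_le fun p => iSup_le fun q => iSup_le fun hpq => ?_
        rw [Submodule.span_le]
        rintro z ⟨a, haF, b, hbF, rfl⟩
        simp only [SetLike.mem_coe, Submodule.mem_comap, LinearMap.lTensor_tmul]
        rcases Nat.eq_zero_or_pos q with hq0 | hq1
        · have hb1 : b ∈ (1 : Submodule K H) := by rw [← hconn, ← hq0]; exact hbF
          obtain ⟨c, hc⟩ := hb1
          have : π b = 0 := by
            rw [← hc, hπ_apply]
            have hε1 : ε (1 : H) = 1 := Bialgebra.counit_one
            simp [hε1]
          rw [this]
          simp
        · have hpn : p ≤ n - 1 := by omega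
          exact Submodule.subset_span (by exact ⟨a, hmono hpn haF, π b, rfl⟩)
      exact hle hΔF
    rw [hlT] at h1
    have h2 : (1 : H) ⊗ₜ[K] x ∈ W := by
      have h1m : (1 : H) ∈ F (n - 1) := by
        apply hmono (Nat.zero_le (n - 1))
        rw [hconn, Submodule.one_eq_span]
        exact Submodule.mem_span_singleton_self 1
      exact Submodule.subset_span (by exact ⟨1, h1m, x, rfl⟩)
    have := sub_mem h1 h2
    simpa [hr] using this
  -- contractions of r lie in J ⊓ F (n-1), hence vanish
  have hctr : ∀ f : H →ₗ[K] K, ctr18 f r = 0 := by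
    intro f
    have hJm : ctr18 f r ∈ J := by
      refine Submodule.span_induction ?_ ?_ ?_ ?_ hrV
      · rintro z ⟨a, haJ, b, rfl⟩
        rw [ctr18_tmul]
        exact Submodule.smul_mem _ _ haJ
      · simp
      · intro s t _ _ hs ht; rw [map_add]; exact add_mem hs ht
      · intro c s _ hs; rw [map_smul]; exact Submodule.smul_mem _ _ hs
    have hFm : ctr18 f r ∈ F (n - 1) := by
      refine Submodule.span_induction ?_ ?_ ?_ ?_ hrW
      · rintro z ⟨a, haF, b, rfl⟩
        rw [ctr18_tmul]
        exact Submodule.smul_mem _ _ haF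
      · simp
      · intro s t _ _ hs ht; rw [map_add]; exact add_mem hs ht
      · intro c s _ hs; rw [map_smul]; exact Submodule.smul_mem _ _ hs
    exact hMbot _ hJm hFm
  have hr0 : r = 0 := ctr18_zero (Module.Basis.ofVectorSpace K H) r
    (fun j => hctr ((Module.Basis.ofVectorSpace K H).coord j))
  refine ⟨x, hxJ, hxne, ?_⟩
  have : Δx - x ⊗ₜ[K] (1 : H) - (1 : H) ⊗ₜ[K] x = 0 := hr0
  rw [sub_eq_zero] at this
  rw [hΔx] at *
  linear_combination (norm := abel) this
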